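/- For reparametrizations φ, ψ : I → I, there exists an increasing self-homeomorphism ρ of I with ψ = φ ∘ ρ if and only if C_φ = C_ψ. Together with the fact that every countable subset of I is realized as a stop value set, this shows that the assignment φ ↦ C_φ induces an order-preserving bijection from the quotient Rep₊(I)/Homeo₊(I) (reparametrizations up to right composition with increasing homeomorphisms, ordered by right divisibility) onto the set of countable subsets of I ordered by inclusion. -/

import Mathlib

open unitInterval Set

def IsRepar (φ : I → I) : Prop :=
  Continuous φ ∧ Monotone φ ∧ φ 0 = 0 ∧ φ 1 = 1

def ConstOn {X : Type*} (p : I → X) (a b : I) : Prop :=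
  ∀ s ∈ Set.Icc a b, ∀ t ∈ Set.Icc a b, p s = p t

def IsStopInterval {X : Type*} (p : I → X) (a b : I) : Prop :=
  a < b ∧ ConstOn p a b ∧
    ∀ a' b' : I, a' ≤ a → b ≤ b' → ConstOn p a' b' → a' = a ∧ b' = b

def StopValues {X : Type*} (p : I → X) : Set X :=
  {c | ∃ a b : I, IsStopInterval p a b ∧ p a = c}

noncomputable section

instance : Fact ((0:ℝ) ≤ 1) := ⟨zero_le_one⟩
noncomputable instance : CompleteLinearOrder I :=
  inferInstanceAs (CompleteLinearOrder (Set.Icc (0:ℝ) 1))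

lemma repar_surjective {φ : I → I} (hφ : IsRepar φ) : Function.Surjective φ := by
  obtain ⟨hc, hm, h0, h1⟩ := hφ
  intro c
  have h01 : (0:I) ≤ 1 := c.2.1.trans c.2.2 |> fun _ => by
    exact Subtype.mk_le_mk.mpr zero_le_one
  have := intermediate_value_Icc h01 hc.continuousOn
  rw [h0, h1] at this
  obtain ⟨t, _, ht⟩ := this ⟨c.2.1, c.2.2⟩
  exact ⟨t, ht⟩

lemma mem_stopValues_iff {φ : I → I} (hc : Continuous φ) (hm : Monotone φ) {c : I} :
    c ∈ StopValues φ ↔ ∃ s t : I, s < t ∧ φ s = c ∧ φ t = c := by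
  constructor
  · rintro ⟨a, b, ⟨hab, hconst, _⟩, rfl⟩
    exact ⟨a, b, hab, rfl, (hconst b ⟨hab.le, le_rfl⟩ a ⟨le_rfl, hab.le⟩)⟩
  · rintro ⟨s, t, hst, hs, ht⟩
    have hcl : IsClosed {x : I | φ x = c} := isClosed_singleton.preimage hc
    have hne : Set.Nonempty {x : I | φ x = c} := ⟨s, hs⟩
    set a := sInf {x : I | φ x = c} with ha'
    set b := sSup {x : I | φ x = c} with hb'
    have ha : φ a = c := hcl.sInf_mem hne
    have hb : φ b = c := hcl.sSup_mem hne
    have has : a ≤ s := sInf_le hs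
    have htb : t ≤ b := le_sSup ht
    have hab : a < b := has.trans_lt (hst.trans_le htb)
    have hconst : ConstOn φ a b := by
      intro x hx y hy
      have hxc : φ x = c := le_antisymm (hb ▸ hm hx.2) (ha ▸ hm hx.1)
      have hyc : φ y = c := le_antisymm (hb ▸ hm hy.2) (ha ▸ hm hy.1)
      rw [hxc, hyc]
    refine ⟨a, b, ⟨hab, hconst, ?_⟩, ha⟩
    intro a' b' ha' hb' hK
    have hab' : a' ≤ b' := (ha'.trans hab.le).trans hb'
    have haa : φ a' = c := by
      have := hK a' ⟨le_rfl, hab'⟩ a ⟨ha', hab.le.trans hb'⟩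
      rw [this, ha]
    have hbb : φ b' = c := by
      have := hK b' ⟨hab', le_rfl⟩ b ⟨ha'.trans hab.le, hb'⟩
      rw [this, hb]
    exact ⟨le_antisymm ha' (sInf_le haa), le_antisymm (le_sSup hbb) hb'⟩

section Fiber

variable (φ : I → I)

def fibI (c : I) : I := sInf {x : I | φ x = c}
def fibS (c : I) : I := sSup {x : I | φ x = c}

variable {φ}

lemma phi_fibI (hφ : IsRepar φ) (c : I) : φ (fibI φ c) = c :=
  (isClosed_singleton.preimage hφ.1).sInf_mem (repar_surjective hφ c)

lemma phi_fibS (hφ : IsRepar φ) (c : I) : φ (fibS φ c) = c :=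
  (isClosed_singleton.preimage hφ.1).sSup_mem (repar_surjective hφ c)

lemma fibI_le {c x : I} (h : φ x = c) : fibI φ c ≤ x := sInf_le h

lemma le_fibS {c x : I} (h : φ x = c) : x ≤ fibS φ c := le_sSup h

lemma fibI_le_fibS (hφ : IsRepar φ) (c : I) : fibI φ c ≤ fibS φ c := fibI_le (phi_fibS hφ c)

lemma phi_of_mem (hφ : IsRepar φ) {c x : I} (h1 : fibI φ c ≤ x) (h2 : x ≤ fibS φ c) : φ x = c :=
  le_antisymm (phi_fibS hφ c ▸ hφ.2.1 h2) (phi_fibI hφ c ▸ hφ.2.1 h1)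

lemma fibS_lt_fibI (hφ : IsRepar φ) {c c' : I} (h : c < c') : fibS φ c < fibI φ c' := by
  by_contra hle
  push_neg at hle
  have := hφ.2.1 hle
  rw [phi_fibI hφ, phi_fibS hφ] at this
  exact absurd h (not_lt.mpr this)

end Fiber

lemma exists_eta {φ ψ : I → I} (hφ : IsRepar φ) (hψ : IsRepar ψ)
    (hsub : StopValues φ ⊆ StopValues ψ) :
    ∃ η : I → I, IsRepar η ∧ ψ = φ ∘ η ∧
      (StopValues ψ ⊆ StopValues φ → StrictMono η) := by
  classical
  set A : I → ℝ := fun c => (fibI φ c : ℝ) with hA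
  set B : I → ℝ := fun c => (fibS φ c : ℝ) with hB
  set U : I → ℝ := fun c => (fibI ψ c : ℝ) with hU
  set V : I → ℝ := fun c => (fibS ψ c : ℝ) with hV
  have hAB : ∀ c, A c ≤ B c := fun c => Subtype.coe_le_coe.mpr (fibI_le_fibS hφ c)
  have hUV : ∀ c, U c ≤ V c := fun c => Subtype.coe_le_coe.mpr (fibI_le_fibS hψ c)
  set r : I → ℝ := fun t => ((t : ℝ) - U (ψ t)) / (V (ψ t) - U (ψ t)) with hrdef
  have hUt : ∀ t : I, U (ψ t) ≤ (t : ℝ) := fun t => Subtype.coe_le_coe.mpr (fibI_le rfl)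
  have htV : ∀ t : I, (t : ℝ) ≤ V (ψ t) := fun t => Subtype.coe_le_coe.mpr (le_fibS rfl)
  have hr0 : ∀ t, 0 ≤ r t := fun t =>
    div_nonneg (sub_nonneg.mpr (hUt t)) (sub_nonneg.mpr (hUV _))
  have hr1 : ∀ t, r t ≤ 1 := fun t =>
    div_le_one_of_le₀ (sub_le_sub_right (htV t) _) (sub_nonneg.mpr (hUV _))
  set v : I → ℝ := fun t => A (ψ t) + r t * (B (ψ t) - A (ψ t)) with hvdef
  have hv1 : ∀ t, A (ψ t) ≤ v t := fun t =>
    le_add_of_nonneg_right (mul_nonneg (hr0 t) (sub_nonneg.mpr (hAB _)))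
  have hv2 : ∀ t, v t ≤ B (ψ t) := by
    intro t
    have h1 := hr1 t
    have h2 := hr0 t
    have h3 := hAB (ψ t)
    show A (ψ t) + r t * (B (ψ t) - A (ψ t)) ≤ B (ψ t)
    nlinarith
  set η : I → I := fun t => ⟨v t,
    le_trans (fibI φ (ψ t)).2.1 (hv1 t), le_trans (hv2 t) (fibS φ (ψ t)).2.2⟩ with hηdef
  have hIη : ∀ t, fibI φ (ψ t) ≤ η t := fun t => Subtype.coe_le_coe.mp (hv1 t)
  have hηS : ∀ t, η t ≤ fibS φ (ψ t) := fun t => Subtype.coe_le_coe.mp (hv2 t)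
  have hφη : ∀ t, φ (η t) = ψ t := fun t => phi_of_mem hφ (hIη t) (hηS t)
  -- div monotonicity helper
  have hdiv : ∀ a b c : ℝ, a ≤ b → 0 ≤ c → a / c ≤ b / c := by
    intro a b c h hc
    rcases hc.eq_or_lt with h0 | h0
    · simp [← h0]
    · exact (div_le_div_iff_of_pos_right h0).mpr h
  have hmono : Monotone η := by
    intro s t hst
    rcases eq_or_lt_of_le (hψ.2.1 hst) with hcc | hcc
    · show (η s : ℝ) ≤ (η t : ℝ)
      show v s ≤ v t
      simp only [hvdef, hrdef, hcc]
      have : ((s:ℝ) - U (ψ t)) / (V (ψ t) - U (ψ t)) ≤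
          ((t:ℝ) - U (ψ t)) / (V (ψ t) - U (ψ t)) :=
        hdiv _ _ _ (sub_le_sub_right (Subtype.coe_le_coe.mpr hst) _)
          (sub_nonneg.mpr (hUV _))
      nlinarith [sub_nonneg.mpr (hAB (ψ t))]
    · exact le_trans (hηS s) (le_trans (fibS_lt_fibI hφ hcc).le (hIη t))
  have hsurj : Function.Surjective η := by
    intro x
    set c : I := φ x with hc
    have hx1 : A c ≤ (x:ℝ) := Subtype.coe_le_coe.mpr (fibI_le rfl)
    have hx2 : (x:ℝ) ≤ B c := Subtype.coe_le_coe.mpr (le_fibS rfl)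
    rcases eq_or_lt_of_le (hAB c) with hab | hab
    · refine ⟨fibI ψ c, ?_⟩
      have hψc : ψ (fibI ψ c) = c := phi_fibI hψ c
      apply Subtype.ext
      show v _ = (x:ℝ)
      simp only [hvdef, hrdef, hψc]
      have : B c - A c = 0 := by rw [← hab]; ring
      rw [this]
      have : (x:ℝ) = A c := le_antisymm (hab ▸ hx2) hx1
      rw [this]; ring
    · -- c is a stop value of φ, hence of ψ
      have hcφ : c ∈ StopValues φ := by
        rw [mem_stopValues_iff hφ.1 hφ.2.1]
        exact ⟨fibI φ c, fibS φ c, Subtype.coe_lt_coe.mp hab, phi_fibI hφ c, phi_fibS hφ c⟩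
      have hcψ := hsub hcφ
      rw [mem_stopValues_iff hψ.1 hψ.2.1] at hcψ
      obtain ⟨s, t, hst, hs, ht⟩ := hcψ
      have huv : U c < V c := by
        have h1 : U c ≤ (s:ℝ) := Subtype.coe_le_coe.mpr (fibI_le hs)
        have h2 : (t:ℝ) ≤ V c := Subtype.coe_le_coe.mpr (le_fibS ht)
        have h3 : (s:ℝ) < (t:ℝ) := Subtype.coe_lt_coe.mpr hst
        linarith
      set τ : ℝ := U c + ((x:ℝ) - A c) / (B c - A c) * (V c - U c) with hτ
      have hq0 : 0 ≤ ((x:ℝ) - A c) / (B c - A c) :=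
        div_nonneg (by linarith) (by linarith)
      have hq1 : ((x:ℝ) - A c) / (B c - A c) ≤ 1 :=
        div_le_one_of_le₀ (by linarith) (by linarith)
      have hτ1 : U c ≤ τ := le_add_of_nonneg_right (mul_nonneg hq0 (by linarith))
      have hτ2 : τ ≤ V c := by
        have h5 := mul_le_mul_of_nonneg_right hq1 (by linarith : (0:ℝ) ≤ V c - U c)
        rw [hτ]; linarith
      have hτI : τ ∈ Set.Icc (0:ℝ) 1 :=
        ⟨le_trans (fibI ψ c).2.1 hτ1, le_trans hτ2 (fibS ψ c).2.2⟩
      have hψτ : ψ ⟨τ, hτI⟩ = c :=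
        phi_of_mem hψ (Subtype.coe_le_coe.mp hτ1) (Subtype.coe_le_coe.mp hτ2)
      refine ⟨⟨τ, hτI⟩, ?_⟩
      apply Subtype.ext
      show v _ = (x:ℝ)
      have hVU : V c - U c ≠ 0 := by linarith
      have hBA : B c - A c ≠ 0 := by linarith
      simp only [hvdef, hrdef, hψτ]
      show A c + (τ - U c) / (V c - U c) * (B c - A c) = (x:ℝ)
      have h1 : τ - U c = ((x:ℝ) - A c) / (B c - A c) * (V c - U c) := by rw [hτ]; ring
      rw [h1, mul_div_assoc, div_self hVU, mul_one, div_mul_cancel₀ _ hBA]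
      ring
  have hη0 : η 0 = 0 := by
    apply Subtype.ext
    show v 0 = 0
    have h0 : ψ 0 = 0 := hψ.2.2.1
    have hA0 : A (0:I) = 0 := by
      have h1 : fibI φ 0 ≤ 0 := fibI_le hφ.2.2.1
      have h2 : (0:I) ≤ fibI φ 0 := (fibI φ 0).2.1
      have : fibI φ (0:I) = 0 := le_antisymm h1 h2
      simp [hA, this]
    have hU0 : U (0:I) = 0 := by
      have h1 : fibI ψ 0 ≤ 0 := fibI_le h0
      have h2 : (0:I) ≤ fibI ψ 0 := (fibI ψ 0).2.1
      have : fibI ψ (0:I) = 0 := le_antisymm h1 h2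
      simp [hU, this]
    simp only [hvdef, hrdef, h0, hA0, hU0]
    norm_num
  have hη1 : η 1 = 1 := by
    apply Subtype.ext
    show v 1 = 1
    have h1 : ψ 1 = 1 := hψ.2.2.2
    have hB1 : B (1:I) = 1 := by
      have ha : (1:I) ≤ fibS φ 1 := le_fibS hφ.2.2.2
      have hb : fibS φ 1 ≤ 1 := (fibS φ 1).2.2
      have : fibS φ (1:I) = 1 := le_antisymm hb ha
      simp [hB, this]
    have hV1 : V (1:I) = 1 := by
      have ha : (1:I) ≤ fibS ψ 1 := le_fibS h1
      have hb : fibS ψ 1 ≤ 1 := (fibS ψ 1).2.2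
      have : fibS ψ (1:I) = 1 := le_antisymm hb ha
      simp [hV, this]
    simp only [hvdef, hrdef, h1, hB1, hV1]
    rw [show ((1:I):ℝ) = 1 from rfl]
    have hu1 : U (1:I) ≤ 1 := (fibI ψ 1).2.2
    rcases eq_or_lt_of_le hu1 with hu | hu
    · have hA1 : A (1:I) = 1 := by
        by_contra hA1
        have hlt : A (1:I) < 1 := lt_of_le_of_ne (by rw [← hB1]; exact hAB 1) hA1
        have h1φ : (1:I) ∈ StopValues φ := by
          rw [mem_stopValues_iff hφ.1 hφ.2.1]
          refine ⟨fibI φ 1, fibS φ 1, ?_, phi_fibI hφ 1, phi_fibS hφ 1⟩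
          have : A (1:I) < B (1:I) := by rw [hB1]; exact hlt
          exact Subtype.coe_lt_coe.mp this
        have h1ψ := hsub h1φ
        rw [mem_stopValues_iff hψ.1 hψ.2.1] at h1ψ
        obtain ⟨s, t, hst, hs, ht⟩ := h1ψ
        have hUs : U (1:I) ≤ (s:ℝ) := Subtype.coe_le_coe.mpr (fibI_le hs)
        have hs1 : (1:ℝ) ≤ (s:ℝ) := by rw [← hu]; exact hUs
        have ht1 : (t:ℝ) ≤ 1 := t.2.2
        have := Subtype.coe_lt_coe.mpr hst
        linarith
      rw [hu]
      simp [hA1]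
    · have hne : (1:ℝ) - U 1 ≠ 0 := by linarith
      rw [div_self hne]
      ring
  have hcont : Continuous η := hmono.continuous_of_surjective hsurj
  refine ⟨η, ⟨hcont, hmono, hη0, hη1⟩, funext fun t => (hφη t).symm, ?_⟩
  intro hsup s t hst
  rcases eq_or_lt_of_le (hψ.2.1 hst.le) with hcc | hcc
  · -- same fiber of ψ
    have hcψ : ψ s ∈ StopValues ψ := by
      rw [mem_stopValues_iff hψ.1 hψ.2.1]
      exact ⟨s, t, hst, rfl, hcc.symm⟩
    have hcφ := hsup hcψ
    rw [mem_stopValues_iff hφ.1 hφ.2.1] at hcφ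
    obtain ⟨p, q, hpq, hp, hq⟩ := hcφ
    have hab : A (ψ s) < B (ψ s) := by
      have h1 : A (ψ s) ≤ (p:ℝ) := Subtype.coe_le_coe.mpr (fibI_le hp)
      have h2 : (q:ℝ) ≤ B (ψ s) := Subtype.coe_le_coe.mpr (le_fibS hq)
      have h3 := Subtype.coe_lt_coe.mpr hpq
      linarith
    have huv : U (ψ s) < V (ψ s) := by
      have h1 : U (ψ s) ≤ (s:ℝ) := hUt s
      have h2 : (t:ℝ) ≤ V (ψ s) := by rw [hcc]; exact htV t
      have h3 := Subtype.coe_lt_coe.mpr hst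
      linarith
    show (η s : ℝ) < (η t : ℝ)
    show v s < v t
    simp only [hvdef, hrdef, ← hcc]
    have hrlt : ((s:ℝ) - U (ψ s)) / (V (ψ s) - U (ψ s)) <
        ((t:ℝ) - U (ψ s)) / (V (ψ s) - U (ψ s)) := by
      apply (div_lt_div_iff_of_pos_right (by linarith)).mpr
      have := Subtype.coe_lt_coe.mpr hst
      linarith
    nlinarith [sub_pos.mpr hab]
  · have hne : η s ≠ η t := fun h => (ne_of_lt hcc) (by rw [← hφη s, ← hφη t, h])
    exact lt_of_le_of_ne (hmono hst.le) hne

section Construct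

def wgeo (n : ℕ) : ℝ := (2:ℝ)⁻¹ ^ (n + 1)

lemma wgeo_pos (n : ℕ) : 0 < wgeo n := pow_pos (by norm_num) _

lemma wgeo_eq (n : ℕ) : wgeo n = (2:ℝ)⁻¹ ^ n * 2⁻¹ := by rw [wgeo, pow_succ]

lemma summable_wgeo : Summable wgeo := by
  have h := summable_geometric_of_lt_one (by norm_num : (0:ℝ) ≤ 2⁻¹) (by norm_num)
  exact (h.mul_right 2⁻¹).congr fun n => (wgeo_eq n).symm

lemma tsum_wgeo : ∑' n, wgeo n = 1 := by
  have h : ∑' n, wgeo n = ∑' n, (2:ℝ)⁻¹ ^ n * 2⁻¹ := tsum_congr wgeo_eq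
  rw [h, tsum_mul_right, tsum_geometric_of_lt_one (by norm_num) (by norm_num)]
  norm_num

lemma wgeo_tail (N : ℕ) : ∑' n, wgeo (n + N) = (2:ℝ)⁻¹ ^ N := by
  have h : ∀ n : ℕ, wgeo (n + N) = (2:ℝ)⁻¹ ^ N * wgeo n := by
    intro n
    rw [wgeo, wgeo, ← pow_add]
    ring_nf
  rw [tsum_congr h, tsum_mul_left, tsum_wgeo, mul_one]

lemma wgeo_tail_lt {ε : ℝ} (hε : 0 < ε) : ∃ N, ∑' n, wgeo (n + N) < ε := by
  obtain ⟨N, hN⟩ := exists_pow_lt_of_lt_one hε (by norm_num : (2:ℝ)⁻¹ < 1)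
  exact ⟨N, by rw [wgeo_tail]; exact hN⟩

variable (f : ℕ → I)

def SL (c : I) : ℝ := ∑' n, if f n < c then wgeo n else 0
def SR (c : I) : ℝ := ∑' n, if f n ≤ c then wgeo n else 0
def Lf (c : I) : ℝ := ((c : ℝ) + SL f c) / 2
def Rf (c : I) : ℝ := ((c : ℝ) + SR f c) / 2

lemma summable_SL (c : I) : Summable fun n => if f n < c then wgeo n else 0 :=
  summable_wgeo.of_nonneg_of_le (fun n => by split <;> simp [le_of_lt (wgeo_pos n)])
    (fun n => by split <;> simp [le_of_lt (wgeo_pos n)])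

lemma summable_SR (c : I) : Summable fun n => if f n ≤ c then wgeo n else 0 :=
  summable_wgeo.of_nonneg_of_le (fun n => by split <;> simp [le_of_lt (wgeo_pos n)])
    (fun n => by split <;> simp [le_of_lt (wgeo_pos n)])

lemma SL_nonneg (c : I) : 0 ≤ SL f c :=
  tsum_nonneg fun n => by split <;> simp [le_of_lt (wgeo_pos n)]

lemma SR_nonneg (c : I) : 0 ≤ SR f c :=
  tsum_nonneg fun n => by split <;> simp [le_of_lt (wgeo_pos n)]

lemma SL_le_SR (c : I) : SL f c ≤ SR f c := by
  apply Summable.tsum_le_tsum _ (summable_SL f c) (summable_SR f c)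
  intro n
  by_cases h : f n < c
  · rw [if_pos h, if_pos h.le]
  · rw [if_neg h]
    split <;> simp [le_of_lt (wgeo_pos n)]

lemma SR_le_one (c : I) : SR f c ≤ 1 := by
  rw [← tsum_wgeo]
  apply Summable.tsum_le_tsum _ (summable_SR f c) summable_wgeo
  intro n
  split <;> simp [le_of_lt (wgeo_pos n)]

lemma SR_le_SL_of_lt {c c' : I} (h : c < c') : SR f c ≤ SL f c' := by
  apply Summable.tsum_le_tsum _ (summable_SR f c) (summable_SL f c')
  intro n
  by_cases hn : f n ≤ c
  · rw [if_pos hn, if_pos (lt_of_le_of_lt hn h)]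
  · rw [if_neg hn]
    split <;> simp [le_of_lt (wgeo_pos n)]

lemma Lf_le_Rf (c : I) : Lf f c ≤ Rf f c := by
  have := SL_le_SR f c; rw [Lf, Rf]; linarith

lemma Lf_nonneg (c : I) : 0 ≤ Lf f c := by
  have := SL_nonneg f c; have := c.2.1; rw [Lf]; linarith

lemma Rf_le_one (c : I) : Rf f c ≤ 1 := by
  have := SR_le_one f c; have := c.2.2; rw [Rf]; linarith

lemma Lf_le_one (c : I) : Lf f c ≤ 1 := (Lf_le_Rf f c).trans (Rf_le_one f c)

lemma Rf_lt_Lf_of_lt {c c' : I} (h : c < c') : Rf f c < Lf f c' := by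
  have h1 := SR_le_SL_of_lt f h
  have h2 : (c:ℝ) < (c':ℝ) := Subtype.coe_lt_coe.mpr h
  rw [Rf, Lf]; linarith

lemma Lf_mono {c c' : I} (h : c ≤ c') : Lf f c ≤ Lf f c' := by
  rcases eq_or_lt_of_le h with rfl | h
  · exact le_rfl
  · exact ((Lf_le_Rf f c).trans (Rf_lt_Lf_of_lt f h).le)

lemma Lf_zero : Lf f 0 = 0 := by
  have h : SL f 0 = 0 := by
    have : (fun n => if f n < 0 then wgeo n else 0) = fun _ => (0:ℝ) :=
      funext fun n => if_neg (not_lt.mpr (f n).2.1)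
    rw [SL, this, tsum_zero]
  rw [Lf, h]
  norm_num

lemma Rf_one : Rf f 1 = 1 := by
  have h : SR f 1 = 1 := by
    have : (fun n => if f n ≤ 1 then wgeo n else 0) = wgeo :=
      funext fun n => if_pos (le_one' )
    rw [SR, this, tsum_wgeo]
  rw [Rf, h]
  norm_num

lemma SL_lt_SR {c : I} {n₀ : ℕ} (h : f n₀ = c) : SL f c < SR f c := by
  have hle : ∀ n, (if f n < c then wgeo n else 0) ≤ (if f n ≤ c then wgeo n else 0) := by
    intro n
    by_cases hn : f n < c
    · rw [if_pos hn, if_pos hn.le]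
    · rw [if_neg hn]; split <;> simp [le_of_lt (wgeo_pos n)]
  have hi : (if f n₀ < c then wgeo n₀ else 0) < (if f n₀ ≤ c then wgeo n₀ else 0) := by
    rw [if_neg (by rw [h]; exact lt_irrefl c), if_pos (le_of_eq h)]
    exact wgeo_pos n₀
  exact Summable.tsum_lt_tsum hle hi (summable_SL f c) (summable_SR f c)

lemma SL_eq_SR {c : I} (h : ∀ n, f n ≠ c) : SL f c = SR f c := by
  apply tsum_congr
  intro n
  by_cases hn : f n ≤ c
  · rw [if_pos hn, if_pos (lt_of_le_of_ne hn (h n))]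
  · rw [if_neg hn, if_neg (fun hlt => hn hlt.le)]

end Construct

lemma KeyL (f : ℕ → I) {c : I} {ε : ℝ} (hε : 0 < ε) (hc : 0 < c) :
    ∃ c' : I, c' < c ∧ Lf f c < Lf f c' + ε := by
  obtain ⟨N, hN⟩ := wgeo_tail_lt hε
  set F := (Finset.range N).filter (fun n => f n < c) with hF
  have hbot : (⊥ : I) < c := lt_of_le_of_lt bot_le hc
  set M : I := F.sup f with hM
  have hMc : M < c := (Finset.sup_lt_iff hbot).mpr fun n hn => (Finset.mem_filter.mp hn).2
  have hx0 : (0:ℝ) ≤ max (M:ℝ) ((c:ℝ) - ε) := le_trans M.2.1 (le_max_left _ _)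
  have hxc : max (M:ℝ) ((c:ℝ) - ε) < (c:ℝ) :=
    max_lt (Subtype.coe_lt_coe.mpr hMc) (by linarith)
  have hx1 : max (M:ℝ) ((c:ℝ) - ε) ≤ 1 := le_trans hxc.le c.2.2
  set x : I := ⟨max (M:ℝ) ((c:ℝ) - ε), hx0, hx1⟩ with hx
  have hxltc : x < c := Subtype.coe_lt_coe.mp hxc
  obtain ⟨c', hxc', hc'c⟩ := exists_between hxltc
  refine ⟨c', hc'c, ?_⟩
  have hcc' : (c:ℝ) - (c':ℝ) < ε := by
    have h1 : ((c:ℝ) - ε) ≤ (x:ℝ) := le_max_right _ _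
    have h2 : (x:ℝ) < (c':ℝ) := Subtype.coe_lt_coe.mpr hxc'
    linarith
  have hMx : M ≤ x := Subtype.coe_le_coe.mp (le_max_left _ _)
  have hterm : ∀ n ∈ Finset.range N,
      (if f n < c then wgeo n else 0) ≤ (if f n < c' then wgeo n else 0) := by
    intro n hn
    by_cases h : f n < c
    · have hnF : n ∈ F := Finset.mem_filter.mpr ⟨hn, h⟩
      have h1 : f n ≤ M := Finset.le_sup hnF
      have h2 : f n < c' := lt_of_le_of_lt (h1.trans hMx) hxc'
      rw [if_pos h, if_pos h2]
    · rw [if_neg h]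
      split <;> simp [le_of_lt (wgeo_pos n)]
  have e1 := Summable.sum_add_tsum_nat_add (f := fun n => if f n < c then wgeo n else 0) N
    (summable_SL f c)
  have e2 := Summable.sum_add_tsum_nat_add (f := fun n => if f n < c' then wgeo n else 0) N
    (summable_SL f c')
  have htail1 : ∑' n, (if f (n + N) < c then wgeo (n + N) else 0) ≤ ∑' n, wgeo (n + N) :=
    Summable.tsum_le_tsum (fun n => by split <;> simp [le_of_lt (wgeo_pos _)])
      ((summable_nat_add_iff N).mpr (summable_SL f c))
      ((summable_nat_add_iff N).mpr summable_wgeo)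
  have htail2 : (0:ℝ) ≤ ∑' n, (if f (n + N) < c' then wgeo (n + N) else 0) :=
    tsum_nonneg fun n => by split <;> simp [le_of_lt (wgeo_pos _)]
  have hsum := Finset.sum_le_sum hterm
  have hkey : SL f c ≤ SL f c' + ∑' n, wgeo (n + N) := by
    rw [SL, SL, ← e1, ← e2]
    linarith
  rw [Lf, Lf]
  linarith

lemma KeyR (f : ℕ → I) {c : I} {ε : ℝ} (hε : 0 < ε) (hc : c < 1) :
    ∃ c' : I, c < c' ∧ Lf f c' < Rf f c + ε := by
  obtain ⟨N, hN⟩ := wgeo_tail_lt hε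
  set F := (Finset.range N).filter (fun n => c < f n) with hF
  have htop : c < (⊤ : I) := lt_of_lt_of_le hc le_top
  set M : I := F.inf f with hM
  have hcM : c < M := (Finset.lt_inf_iff htop).mpr fun n hn => (Finset.mem_filter.mp hn).2
  have hx1 : min (M:ℝ) ((c:ℝ) + ε) ≤ 1 := le_trans (min_le_left _ _) M.2.2
  have hcx : (c:ℝ) < min (M:ℝ) ((c:ℝ) + ε) :=
    lt_min (Subtype.coe_lt_coe.mpr hcM) (by linarith)
  have hx0 : (0:ℝ) ≤ min (M:ℝ) ((c:ℝ) + ε) := le_trans c.2.1 hcx.le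
  set x : I := ⟨min (M:ℝ) ((c:ℝ) + ε), hx0, hx1⟩ with hx
  have hcxI : c < x := Subtype.coe_lt_coe.mp hcx
  obtain ⟨c', hcc', hc'x⟩ := exists_between hcxI
  refine ⟨c', hcc', ?_⟩
  have hc'ε : (c':ℝ) < (c:ℝ) + ε :=
    lt_of_lt_of_le (Subtype.coe_lt_coe.mpr hc'x) (min_le_right _ _)
  have hxM : x ≤ M := Subtype.coe_le_coe.mp (min_le_left _ _)
  have hterm : ∀ n ∈ Finset.range N,
      (if f n < c' then wgeo n else 0) ≤ (if f n ≤ c then wgeo n else 0) := by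
    intro n hn
    by_cases h : f n ≤ c
    · rw [if_pos h]
      split <;> simp [le_of_lt (wgeo_pos n)]
    · have hnF : n ∈ F := Finset.mem_filter.mpr ⟨hn, not_le.mp h⟩
      have hMf : M ≤ f n := Finset.inf_le hnF
      have h2 : ¬ (f n < c') := not_lt.mpr ((hc'x.le.trans hxM).trans hMf)
      rw [if_neg h2, if_neg h]
  have e1 := Summable.sum_add_tsum_nat_add (f := fun n => if f n < c' then wgeo n else 0) N
    (summable_SL f c')
  have e2 := Summable.sum_add_tsum_nat_add (f := fun n => if f n ≤ c then wgeo n else 0) N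
    (summable_SR f c)
  have htail1 : ∑' n, (if f (n + N) < c' then wgeo (n + N) else 0) ≤ ∑' n, wgeo (n + N) :=
    Summable.tsum_le_tsum (fun n => by split <;> simp [le_of_lt (wgeo_pos _)])
      ((summable_nat_add_iff N).mpr (summable_SL f c'))
      ((summable_nat_add_iff N).mpr summable_wgeo)
  have htail2 : (0:ℝ) ≤ ∑' n, (if f (n + N) ≤ c then wgeo (n + N) else 0) :=
    tsum_nonneg fun n => by split <;> simp [le_of_lt (wgeo_pos _)]
  have hsum := Finset.sum_le_sum hterm
  have hkey : SL f c' ≤ SR f c + ∑' n, wgeo (n + N) := by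
    rw [SL, SR, ← e1, ← e2]
    linarith
  rw [Lf, Rf]
  linarith

noncomputable def phiC (f : ℕ → I) (t : I) : I := sSup {c : I | Lf f c ≤ (t:ℝ)}

lemma phiC_mono (f : ℕ → I) : Monotone (phiC f) := by
  intro s t hst
  apply sSup_le_sSup
  intro c hc
  exact le_trans hc (Subtype.coe_le_coe.mpr hst)

lemma Lf_phiC_le (f : ℕ → I) (t : I) : Lf f (phiC f t) ≤ (t:ℝ) := by
  by_contra h
  push_neg at h
  set c := phiC f t with hcdef
  have hc0 : 0 < c := by
    rcases eq_or_lt_of_le (c.2.1 : (0:ℝ) ≤ (c:ℝ)) with h0 | h0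
    · exfalso
      have : Lf f c = 0 := by
        have : c = 0 := Subtype.ext h0.symm
        rw [this, Lf_zero]
      rw [this] at h
      exact absurd t.2.1 (not_le.mpr h)
    · exact Subtype.coe_lt_coe.mp h0
  obtain ⟨c', hc'c, hL⟩ := KeyL f (by linarith : (0:ℝ) < Lf f c - (t:ℝ)) hc0
  have ht : (t:ℝ) < Lf f c' := by linarith
  obtain ⟨d, hd, hc'd⟩ := lt_sSup_iff.mp (hc'c.trans_le (le_of_eq hcdef))
  have : Lf f c' ≤ Lf f d := Lf_mono f hc'd.le
  exact absurd (this.trans hd) (not_le.mpr ht)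

lemma phiC_eq_of (f : ℕ → I) {c t : I} (h1 : Lf f c ≤ (t:ℝ)) (h2 : (t:ℝ) ≤ Rf f c) :
    phiC f t = c := by
  apply le_antisymm
  · apply sSup_le
    intro d hd
    by_contra hcd
    push_neg at hcd
    have := Rf_lt_Lf_of_lt f hcd
    exact absurd (hd.trans h2) (not_le.mpr this)
  · exact le_sSup h1

lemma le_Rf_phiC (f : ℕ → I) (t : I) : (t:ℝ) ≤ Rf f (phiC f t) := by
  set c := phiC f t with hcdef
  rcases eq_or_lt_of_le (le_one' : c ≤ 1) with h1 | h1
  · rw [h1, Rf_one]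
    exact t.2.2
  · by_contra h
    push_neg at h
    obtain ⟨c', hcc', hL⟩ := KeyR f (by linarith : (0:ℝ) < (t:ℝ) - Rf f c) h1
    have hmem : c' ∈ {d : I | Lf f d ≤ (t:ℝ)} := by
      have : Lf f c' < (t:ℝ) := by linarith
      exact this.le
    have : c' ≤ c := le_sSup hmem
    exact absurd hcc' (not_lt.mpr this)

lemma phiC_repar (f : ℕ → I) : IsRepar (phiC f) := by
  have hmono := phiC_mono f
  have hsurj : Function.Surjective (phiC f) := by
    intro c
    refine ⟨⟨Lf f c, Lf_nonneg f c, Lf_le_one f c⟩, ?_⟩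
    exact phiC_eq_of f le_rfl (Lf_le_Rf f c)
  refine ⟨hmono.continuous_of_surjective hsurj, hmono, ?_, ?_⟩
  · apply phiC_eq_of f
    · rw [Lf_zero]
      norm_num
    · rw [show (((0:I)):ℝ) = 0 from rfl]
      exact (Lf_nonneg f 0).trans (Lf_le_Rf f 0)
  · apply phiC_eq_of f
    · rw [show (((1:I)):ℝ) = 1 from rfl]
      exact Lf_le_one f 1
    · rw [Rf_one]
      exact (1:I).2.2

lemma stopValues_phiC (f : ℕ → I) : StopValues (phiC f) = Set.range f := by
  have hrep := phiC_repar f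
  ext c
  rw [mem_stopValues_iff hrep.1 hrep.2.1]
  constructor
  · rintro ⟨s, t, hst, hs, ht⟩
    have h1 : Lf f c ≤ (s:ℝ) := by rw [← hs]; exact Lf_phiC_le f s
    have h2 : (t:ℝ) ≤ Rf f c := by rw [← ht]; exact le_Rf_phiC f t
    have hstR : (s:ℝ) < (t:ℝ) := Subtype.coe_lt_coe.mpr hst
    have hLR : Lf f c < Rf f c := by linarith
    by_contra hc
    have hne : ∀ n, f n ≠ c := fun n hn => hc ⟨n, hn⟩
    rw [Lf, Rf, SL_eq_SR f hne] at hLR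
    exact lt_irrefl _ hLR
  · rintro ⟨n, hn⟩
    have hLR : Lf f c < Rf f c := by
      have := SL_lt_SR f hn
      rw [Lf, Rf]
      linarith
    refine ⟨⟨Lf f c, Lf_nonneg f c, Lf_le_one f c⟩,
      ⟨Rf f c, (Lf_nonneg f c).trans (Lf_le_Rf f c), Rf_le_one f c⟩,
      Subtype.mk_lt_mk.mpr hLR, ?_, ?_⟩
    · exact phiC_eq_of f le_rfl (Lf_le_Rf f c)
    · exact phiC_eq_of f (Lf_le_Rf f c) le_rfl

lemma exists_phi_of_countable (C : Set I) (hC : C.Countable) :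
    ∃ φ : I → I, IsRepar φ ∧ StopValues φ = C := by
  rcases C.eq_empty_or_nonempty with hE | hne
  · refine ⟨id, ⟨continuous_id, monotone_id, rfl, rfl⟩, ?_⟩
    rw [hE]
    ext c
    simp only [Set.mem_empty_iff_false, iff_false]
    rw [mem_stopValues_iff continuous_id monotone_id]
    rintro ⟨s, t, hst, hs, ht⟩
    exact (ne_of_lt hst) ((hs : s = c).trans (ht : t = c).symm)
  · obtain ⟨f, hfC⟩ := hC.exists_eq_range hne
    exact ⟨phiC f, phiC_repar f, by rw [stopValues_phiC, hfC]⟩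

/-- The assignment `φ ↦ C_φ` induces an order-preserving bijection from
`Rep₊(I)/Homeo₊(I)` (reparametrizations up to right composition with an
increasing self-homeomorphism of `I`, ordered by right divisibility) onto
the set of countable subsets of `I` ordered by inclusion. Concretely:
(i) two reparametrizations differ by right composition with an increasing
homeomorphism iff they have the same stop values (well-definedness and
injectivity); (ii) every countable subset of `I` is a stop value set
(surjectivity); (iii) `φ` right-divides `ψ` iff `C_φ ⊆ C_ψ`
(order-preservation both ways). -/
theorem stopValues_induces_orderIso_of_repar_mod_homeo :
    (∀ φ ψ : I → I, IsRepar φ → IsRepar ψ →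
      ((∃ ρ : I → I, IsRepar ρ ∧ StrictMono ρ ∧ ψ = φ ∘ ρ) ↔
        StopValues φ = StopValues ψ)) ∧
    (∀ C : Set I, C.Countable → ∃ φ : I → I, IsRepar φ ∧ StopValues φ = C) ∧
    (∀ φ ψ : I → I, IsRepar φ → IsRepar ψ →
      ((∃ η : I → I, IsRepar η ∧ ψ = φ ∘ η) ↔ StopValues φ ⊆ StopValues ψ)) := by
  have fwd : ∀ φ η : I → I, IsRepar φ → IsRepar η →
      StopValues φ ⊆ StopValues (φ ∘ η) := by
    intro φ η hφ hη c hc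
    rw [mem_stopValues_iff hφ.1 hφ.2.1] at hc
    obtain ⟨s, t, hst, hs, ht⟩ := hc
    obtain ⟨s', hs'⟩ := repar_surjective hη s
    obtain ⟨t', ht'⟩ := repar_surjective hη t
    have hlt : s' < t' := by
      by_contra hle
      push_neg at hle
      have := hη.2.1 hle
      rw [hs', ht'] at this
      exact absurd hst (not_lt.mpr this)
    rw [mem_stopValues_iff (hφ.1.comp hη.1) (hφ.2.1.comp hη.2.1)]
    exact ⟨s', t', hlt, by simp [Function.comp, hs', hs], by simp [Function.comp, ht', ht]⟩
  refine ⟨?_, exists_phi_of_countable, ?_⟩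
  · intro φ ψ hφ hψ
    constructor
    · rintro ⟨ρ, hρ, hsm, rfl⟩
      apply Set.Subset.antisymm (fwd φ ρ hφ hρ)
      intro c hc
      rw [mem_stopValues_iff (hφ.1.comp hρ.1) (hφ.2.1.comp hρ.2.1)] at hc
      obtain ⟨s, t, hst, hs, ht⟩ := hc
      rw [mem_stopValues_iff hφ.1 hφ.2.1]
      exact ⟨ρ s, ρ t, hsm hst, hs, ht⟩
    · intro heq
      obtain ⟨η, hη, heqψ, hsm⟩ := exists_eta hφ hψ (le_of_eq heq)
      exact ⟨η, hη, hsm (le_of_eq heq.symm), heqψ⟩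
  · intro φ ψ hφ hψ
    constructor
    · rintro ⟨η, hη, rfl⟩
      exact fwd φ η hφ hη
    · intro hsub
      obtain ⟨η, hη, heqψ, _⟩ := exists_eta hφ hψ hsub
      exact ⟨η, hη, heqψ⟩
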